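/- Let X ∈ ℝ^{n×p}, let W ∈ ℝ^{n×n} be diagonal with nonnegative entries, let S ⊆ {1,…,p} with complement S^c, let β*_S ∈ ℝ^{|S|}, ε ∈ ℝ^n, and Y = X_S β*_S + ε. Assume X_S^⊤ W X_S is invertible and set ψ = ‖X_{S^c}^⊤ W X_S (X_S^⊤ W X_S)^{−1}‖_∞. Suppose β̂_S ∈ ℝ^{|S|} satisfies the stationarity equation X_S^⊤ W (Y − X_S β̂_S) = c · v for some scalar c ≥ 0 and some vector v ∈ ℝ^{|S|} with ‖v‖_∞ ≤ 1. Then ‖X_{S^c}^⊤ W (Y − X_S β̂_S)‖_∞ ≤ (1 + ψ) ‖X^⊤ W ε‖_∞ + c ψ. -/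
import Mathlib


open Matrix Finset Real

noncomputable section

/-- Maximum absolute row sum of a matrix (operator ∞-norm). -/
def rowSumNorm {ι κ : Type*} [Fintype ι] [Fintype κ] (A : Matrix ι κ ℝ) : ℝ :=
  ⨆ i, ∑ j, |A i j|

/-- Maximum absolute entry of a vector (ℓ∞ norm). -/
def vinf {ι : Type*} (v : ι → ℝ) : ℝ := ⨆ i, |v i|

/-- Submatrix of the columns indexed by a finite set `S`. -/
def colSub {d p : ℕ} (A : Matrix (Fin d) (Fin p) ℝ) (S : Finset (Fin p)) :
    Matrix (Fin d) {j // j ∈ S} ℝ := A.submatrix id (fun j => (j : Fin p))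

lemma vinf_nonneg {ι : Type*} (v : ι → ℝ) : 0 ≤ vinf v :=
  Real.iSup_nonneg fun _ => abs_nonneg _

lemma vinf_le {ι : Type*} {v : ι → ℝ} {M : ℝ} (hM : 0 ≤ M) (h : ∀ i, |v i| ≤ M) :
    vinf v ≤ M := Real.iSup_le h hM

lemma abs_le_vinf {ι : Type*} [Fintype ι] (v : ι → ℝ) (i : ι) : |v i| ≤ vinf v :=
  le_ciSup (f := fun i => |v i|) (Set.Finite.bddAbove (Set.finite_range _)) i

lemma rowSumNorm_nonneg {ι κ : Type*} [Fintype ι] [Fintype κ] (A : Matrix ι κ ℝ) :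
    0 ≤ rowSumNorm A :=
  Real.iSup_nonneg fun _ => Finset.sum_nonneg fun _ _ => abs_nonneg _

lemma vinf_mulVec_le {ι κ : Type*} [Fintype ι] [Fintype κ] (A : Matrix ι κ ℝ) (x : κ → ℝ) :
    vinf (A *ᵥ x) ≤ rowSumNorm A * vinf x := by
  refine vinf_le (mul_nonneg (rowSumNorm_nonneg A) (vinf_nonneg x)) fun i => ?_
  calc |(A *ᵥ x) i| ≤ ∑ j, |A i j| * |x j| := by
        simp only [Matrix.mulVec, dotProduct]
        exact le_of_le_of_eq (Finset.abs_sum_le_sum_abs _ _) (by simp [abs_mul])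
    _ ≤ ∑ j, |A i j| * vinf x :=
        Finset.sum_le_sum fun j _ => mul_le_mul_of_nonneg_left (abs_le_vinf x j) (abs_nonneg _)
    _ = (∑ j, |A i j|) * vinf x := by rw [Finset.sum_mul]
    _ ≤ rowSumNorm A * vinf x :=
        mul_le_mul_of_nonneg_right
          (le_ciSup (f := fun i => ∑ j, |A i j|) (Set.Finite.bddAbove (Set.finite_range _)) i)
          (vinf_nonneg x)

lemma colSub_transpose_mulVec {d p : ℕ} (X : Matrix (Fin d) (Fin p) ℝ)
    (S : Finset (Fin p)) (w : Fin d → ℝ) (j : {j // j ∈ S}) :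
    ((colSub X S)ᵀ *ᵥ w) j = (Xᵀ *ᵥ w) (j : Fin p) := by
  simp [colSub, Matrix.mulVec, dotProduct, Matrix.transpose, Matrix.submatrix]

lemma vinf_colSub_le {d p : ℕ} (X : Matrix (Fin d) (Fin p) ℝ)
    (S : Finset (Fin p)) (w : Fin d → ℝ) :
    vinf ((colSub X S)ᵀ *ᵥ w) ≤ vinf (Xᵀ *ᵥ w) := by
  refine vinf_le (vinf_nonneg _) fun j => ?_
  rw [colSub_transpose_mulVec]
  exact abs_le_vinf _ _

/-- Inequality (S1.tnorm) in the proof of Theorem 1, part 2: if `β̂_S` solves the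
stationarity equation `X_S^⊤ W (Y − X_S β̂_S) = c v` with `c ≥ 0` and `‖v‖_∞ ≤ 1`, then
`‖X_{S^c}^⊤ W (Y − X_S β̂_S)‖_∞ ≤ (1 + ψ)‖X^⊤ W ε‖_∞ + c ψ`. -/
theorem stationary_residual_inf_norm_bound
    (n p : ℕ) (X : Matrix (Fin n) (Fin p) ℝ)
    (W : Matrix (Fin n) (Fin n) ℝ)
    (hWdiag : W.IsDiag) (hWnonneg : ∀ i, 0 ≤ W i i)
    (S : Finset (Fin p)) (βS : {j // j ∈ S} → ℝ) (ε : Fin n → ℝ)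
    (Y : Fin n → ℝ) (hY : Y = (colSub X S) *ᵥ βS + ε)
    (hinv : IsUnit ((colSub X S)ᵀ * W * colSub X S).det)
    (ψ : ℝ)
    (hψ : ψ = rowSumNorm
      ((colSub X Sᶜ)ᵀ * W * colSub X S * ((colSub X S)ᵀ * W * colSub X S)⁻¹))
    (βh : {j // j ∈ S} → ℝ) (c : ℝ) (hc : 0 ≤ c)
    (v : {j // j ∈ S} → ℝ) (hv : vinf v ≤ 1)
    (hstat : (colSub X S)ᵀ *ᵥ (W *ᵥ (Y - colSub X S *ᵥ βh)) = c • v) :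
    vinf ((colSub X Sᶜ)ᵀ *ᵥ (W *ᵥ (Y - colSub X S *ᵥ βh))) ≤
      (1 + ψ) * vinf (Xᵀ *ᵥ (W *ᵥ ε)) + c * ψ := by
  set XS := colSub X S with hXS
  set XSc := colSub X Sᶜ with hXSc
  set M := XSᵀ * W * XS with hMdef
  set N := XScᵀ * W * XS with hNdef
  set aS : {j // j ∈ S} → ℝ := XSᵀ *ᵥ (W *ᵥ ε) with haS
  set aSc : {j // j ∈ Sᶜ} → ℝ := XScᵀ *ᵥ (W *ᵥ ε) with haSc
  -- residual decomposition
  have hr : Y - XS *ᵥ βh = XS *ᵥ (βS - βh) + ε := by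
    rw [hY, Matrix.mulVec_sub]; abel
  have hWr : W *ᵥ (Y - XS *ᵥ βh) = W *ᵥ (XS *ᵥ (βS - βh)) + W *ᵥ ε := by
    rw [hr, Matrix.mulVec_add]
  -- stationarity gives M *ᵥ (βS - βh) = c • v - aS
  have hM : M *ᵥ (βS - βh) = c • v - aS := by
    have h := hstat
    rw [hWr, Matrix.mulVec_add, Matrix.mulVec_mulVec, Matrix.mulVec_mulVec,
      ← hMdef, ← haS] at h
    rw [← h]; abel
  -- key identity
  have hNM : N * M⁻¹ * M = N := by
    rw [Matrix.mul_assoc, Matrix.nonsing_inv_mul _ hinv, Matrix.mul_one]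
  have key : XScᵀ *ᵥ (W *ᵥ (Y - XS *ᵥ βh)) = (N * M⁻¹) *ᵥ (c • v - aS) + aSc := by
    rw [hWr, Matrix.mulVec_add, Matrix.mulVec_mulVec, Matrix.mulVec_mulVec,
      ← hNdef, ← haSc, ← hM, Matrix.mulVec_mulVec, hNM]
  -- bounds
  have hψ' : ψ = rowSumNorm (N * M⁻¹) := hψ
  have hψ0 : 0 ≤ ψ := hψ' ▸ rowSumNorm_nonneg _
  set E := vinf (Xᵀ *ᵥ (W *ᵥ ε)) with hE
  have hE0 : 0 ≤ E := vinf_nonneg _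
  have haSle : vinf aS ≤ E := vinf_colSub_le X S _
  have haScle : vinf aSc ≤ E := vinf_colSub_le X Sᶜ _
  have hcv : vinf (c • v - aS) ≤ c + E := by
    refine vinf_le (by linarith) fun j => ?_
    have h1 : |v j| ≤ 1 := le_trans (abs_le_vinf v j) hv
    have h2 : |aS j| ≤ E := le_trans (abs_le_vinf aS j) haSle
    calc |(c • v - aS) j| ≤ |c * v j| + |aS j| := by
          simpa [sub_eq_add_neg] using abs_add_le (c * v j) (-aS j)
      _ ≤ c * 1 + E := by
          rw [abs_mul, abs_of_nonneg hc]
          exact add_le_add (mul_le_mul_of_nonneg_left h1 hc) h2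
      _ = c + E := by ring
  have hmain : vinf ((N * M⁻¹) *ᵥ (c • v - aS) + aSc) ≤ ψ * (c + E) + E := by
    refine vinf_le (by nlinarith) fun j => ?_
    have h1 : |((N * M⁻¹) *ᵥ (c • v - aS)) j| ≤ ψ * (c + E) := by
      refine le_trans (abs_le_vinf _ j) ?_
      refine le_trans (vinf_mulVec_le _ _) ?_
      rw [hψ']
      exact mul_le_mul_of_nonneg_left hcv (hψ' ▸ hψ0)
    have h2 : |aSc j| ≤ E := le_trans (abs_le_vinf aSc j) haScle
    calc |((N * M⁻¹) *ᵥ (c • v - aS) + aSc) j|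
        ≤ |((N * M⁻¹) *ᵥ (c • v - aS)) j| + |aSc j| := abs_add_le _ _
      _ ≤ ψ * (c + E) + E := add_le_add h1 h2
  rw [key]
  calc vinf ((N * M⁻¹) *ᵥ (c • v - aS) + aSc) ≤ ψ * (c + E) + E := hmain
    _ = (1 + ψ) * E + c * ψ := by ring
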